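/- Let r, n ∈ ℕ. Any properly edge-coloured n-vertex graph G with at least rn/3 edges, maximum degree at most n/10, and in which no colour appears on a matching of size at least n/10, contains a rainbow matching with r edges. -/

import Mathlib

open scoped Classical

/-- A colouring of edges is proper if edges sharing a vertex get distinct colours. -/
def ProperColoring {V : Type*} (G : SimpleGraph V) (c : Sym2 V → ℕ) : Prop :=
  ∀ ⦃a b b' : V⦄, G.Adj a b → G.Adj a b' → b ≠ b' → c s(a, b) ≠ c s(a, b')

/-- A set of edges is rainbow if its edges have pairwise distinct colours. -/
def IsRainbow {V : Type*} (c : Sym2 V → ℕ) (E : Set (Sym2 V)) : Prop :=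
  Set.InjOn c E

/-- A finite set of edges forms a matching: non-loops, pairwise vertex-disjoint. -/
def IsMatchingSet {V : Type*} (M : Finset (Sym2 V)) : Prop :=
  (∀ e ∈ M, ¬ e.IsDiag) ∧
  ∀ e ∈ M, ∀ f ∈ M, e ≠ f → ∀ v : V, v ∈ e → v ∉ f

/-- A class `U` of colours is `α`-rich in `G`: the edges of `G` with colour in `U`
contain a matching of size at least `α * |V|`. -/
def RichClass {V : Type*} [Fintype V] (G : SimpleGraph V) (c : Sym2 V → ℕ)
    (α : ℝ) (U : Set ℕ) : Prop :=
  ∃ M : Finset (Sym2 V), ↑M ⊆ G.edgeSet ∧ (∀ e ∈ M, c e ∈ U) ∧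
    IsMatchingSet M ∧ α * (Fintype.card V : ℝ) ≤ (M.card : ℝ)

/-- `G` is `α`-well-coloured: its colours can be partitioned into `|V| - 1`
pairwise disjoint `α`-rich classes. -/
def WellColoured {V : Type*} [Fintype V] (G : SimpleGraph V) (c : Sym2 V → ℕ)
    (α : ℝ) : Prop :=
  ∃ U : Fin (Fintype.card V - 1) → Set ℕ,
    (∀ i j, i ≠ j → Disjoint (U i) (U j)) ∧
    (∀ i, RichClass G c α (U i)) ∧
    (∀ e ∈ G.edgeSet, ∃ i, c e ∈ U i)

/-- A rainbow forest in `G`. -/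
def RainbowForest {V : Type*} (G : SimpleGraph V) (c : Sym2 V → ℕ)
    (F : SimpleGraph V) : Prop :=
  F ≤ G ∧ F.IsAcyclic ∧ IsRainbow c F.edgeSet

/-- `G` is `(α, t)`-robustly-coloured: after removing the edges of any `t`
rainbow forests, `G` remains `α`-well-coloured. -/
def RobustlyColoured {V : Type*} [Fintype V] (G : SimpleGraph V) (c : Sym2 V → ℕ)
    (α : ℝ) (t : ℕ) : Prop :=
  ∀ F : Fin t → SimpleGraph V, (∀ i, RainbowForest G c (F i)) →
    WellColoured (G.deleteEdges (⋃ i, (F i).edgeSet)) c α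

theorem stmt8 {V : Type*} [Fintype V] [DecidableEq V] (G : SimpleGraph V)
    (c : Sym2 V → ℕ) (r : ℕ)
    (hproper : ProperColoring G c)
    (hedges : (r : ℝ) * (Fintype.card V : ℝ) / 3 ≤ (G.edgeFinset.card : ℝ))
    (hmaxdeg : ∀ v : V, (G.degree v : ℝ) ≤ (Fintype.card V : ℝ) / 10)
    (hnorich : ∀ k : ℕ, ¬ RichClass G c (1 / 10) {k}) :
    ∃ M : Finset (Sym2 V), ↑M ⊆ G.edgeSet ∧ IsMatchingSet M ∧
      Set.InjOn c ↑M ∧ M.card = r := by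
  classical
  -- the number of vertices is positive, else the empty matching is a rich class
  have hn : (0 : ℝ) < (Fintype.card V : ℝ) := by
    by_contra h
    push_neg at h
    refine hnorich 0 ⟨∅, by simp, by simp, ⟨by simp, by simp⟩, ?_⟩
    simp
    nlinarith
  induction r generalizing G with
  | zero =>
    refine ⟨∅, by simp, ⟨by simp, by simp⟩, by simp, rfl⟩
  | succ r ih =>
    -- there is an edge
    have hEne : G.edgeFinset.Nonempty := by
      rw [Finset.nonempty_iff_ne_empty]
      intro h
      rw [h] at hedges
      simp only [Finset.card_empty, Nat.cast_zero] at hedges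
      push_cast at hedges
      have hr : (0:ℝ) ≤ (r:ℝ) := Nat.cast_nonneg r
      nlinarith
    obtain ⟨e, he⟩ := hEne
    obtain ⟨u, v, rfl⟩ : ∃ u v, e = s(u, v) := by
      induction e using Sym2.ind with
      | _ x y => exact ⟨x, y, rfl⟩
    have hadj : G.Adj u v := by
      rw [← SimpleGraph.mem_edgeSet]
      exact SimpleGraph.mem_edgeFinset.mp he
    -- the set of deleted edges
    set S : Set (Sym2 V) := {f | u ∈ f ∨ v ∈ f ∨ c f = c s(u, v)} with hS
    set G' := G.deleteEdges S with hG'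
    have hle : G' ≤ G := SimpleGraph.deleteEdges_le S
    have hE'set : G'.edgeSet = G.edgeSet \ S := SimpleGraph.edgeSet_deleteEdges S
    -- colour class of c s(u,v) is a matching of size < n/10
    set T : Finset (Sym2 V) := G.edgeFinset.filter (fun f => c f = c s(u, v)) with hT
    have hTmatch : IsMatchingSet T := by
      constructor
      · intro f hf
        exact G.not_isDiag_of_mem_edgeSet
          (SimpleGraph.mem_edgeFinset.mp (Finset.mem_filter.mp hf).1)
      · intro f hf g hg hfg w hwf hwg
        obtain ⟨hfE, hfc⟩ := Finset.mem_filter.mp hf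
        obtain ⟨hgE, hgc⟩ := Finset.mem_filter.mp hg
        have hfE' := SimpleGraph.mem_edgeFinset.mp hfE
        have hgE' := SimpleGraph.mem_edgeFinset.mp hgE
        have hf' := Sym2.other_spec hwf
        have hg' := Sym2.other_spec hwg
        rw [← hf'] at hfE'
        rw [← hg'] at hgE'
        have hne : Sym2.Mem.other hwf ≠ Sym2.Mem.other hwg := by
          intro h
          apply hfg
          rw [← hf', ← hg', h]
        exact hproper (G.mem_edgeSet.mp hfE') (G.mem_edgeSet.mp hgE')
          hne (by rw [hf', hg', hfc, hgc])
    have hTcard : (T.card : ℝ) ≤ (Fintype.card V : ℝ) / 10 := by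
      by_contra h
      push_neg at h
      refine hnorich (c s(u, v)) ⟨T, ?_, ?_, hTmatch, by linarith⟩
      · intro f hf
        exact SimpleGraph.mem_edgeFinset.mp (Finset.mem_filter.mp hf).1
      · intro f hf
        exact (Finset.mem_filter.mp hf).2
    -- counting the edges of G'
    have hE'fin : G'.edgeFinset = G.edgeFinset.filter (fun f => f ∉ S) := by
      ext f
      simp [SimpleGraph.mem_edgeFinset, hE'set]
    have hsub : G.edgeFinset.filter (fun f => f ∈ S) ⊆
        (G.incidenceFinset u ∪ G.incidenceFinset v) ∪ T := by
      intro f hf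
      obtain ⟨hfE, hfS⟩ := Finset.mem_filter.mp hf
      rcases hfS with h | h | h
      · refine Finset.mem_union_left _ (Finset.mem_union_left _ ?_)
        rw [SimpleGraph.mem_incidenceFinset]
        exact ⟨SimpleGraph.mem_edgeFinset.mp hfE, h⟩
      · refine Finset.mem_union_left _ (Finset.mem_union_right _ ?_)
        rw [SimpleGraph.mem_incidenceFinset]
        exact ⟨SimpleGraph.mem_edgeFinset.mp hfE, h⟩
      · exact Finset.mem_union_right _ (Finset.mem_filter.mpr ⟨hfE, h⟩)
    have hcount : ((G.edgeFinset.filter (fun f => f ∈ S)).card : ℝ) ≤ 3 * (Fintype.card V : ℝ) / 10 := by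
      have h1 : (G.edgeFinset.filter (fun f => f ∈ S)).card ≤
          ((G.incidenceFinset u ∪ G.incidenceFinset v) ∪ T).card :=
        Finset.card_le_card hsub
      have h2 : ((G.incidenceFinset u ∪ G.incidenceFinset v) ∪ T).card ≤
          (G.incidenceFinset u).card + (G.incidenceFinset v).card + T.card :=
        le_trans (Finset.card_union_le _ _)
          (Nat.add_le_add_right (Finset.card_union_le _ _) _)
      have hiu : (G.incidenceFinset u).card = G.degree u :=
        G.card_incidenceFinset_eq_degree u
      have hiv : (G.incidenceFinset v).card = G.degree v :=
        G.card_incidenceFinset_eq_degree v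
      have hdu := hmaxdeg u
      have hdv := hmaxdeg v
      have := le_trans h1 h2
      rw [hiu, hiv] at this
      have hcast : ((G.edgeFinset.filter (fun f => f ∈ S)).card : ℝ) ≤
          (G.degree u : ℝ) + (G.degree v : ℝ) + (T.card : ℝ) := by
        exact_mod_cast this
      linarith
    have hcards : (G.edgeFinset.filter (fun f => f ∈ S)).card +
        (G.edgeFinset.filter (fun f => f ∉ S)).card = G.edgeFinset.card :=
      Finset.card_filter_add_card_filter_not _
    -- hypotheses for the inductive step
    have hedges' : (r : ℝ) * (Fintype.card V : ℝ) / 3 ≤ (G'.edgeFinset.card : ℝ) := by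
      rw [hE'fin]
      have : ((G.edgeFinset.filter (fun f => f ∉ S)).card : ℝ) =
          (G.edgeFinset.card : ℝ) - ((G.edgeFinset.filter (fun f => f ∈ S)).card : ℝ) := by
        rw [← hcards]
        push_cast
        ring
      rw [this]
      push_cast at hedges
      linarith
    have hproper' : ProperColoring G' c := fun a b b' h1 h2 hne =>
      hproper (hle h1) (hle h2) hne
    have hmaxdeg' : ∀ w : V, ((G'.degree w : ℝ)) ≤ (Fintype.card V : ℝ) / 10 := by
      intro w
      refine le_trans ?_ (hmaxdeg w)
      have : G'.neighborFinset w ⊆ G.neighborFinset w := by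
        intro x hx
        rw [SimpleGraph.mem_neighborFinset] at hx ⊢
        exact hle hx
      exact_mod_cast Finset.card_le_card this
    have hnorich' : ∀ k : ℕ, ¬ RichClass G' c (1 / 10) {k} := by
      rintro k ⟨M, hM1, hM2, hM3, hM4⟩
      exact hnorich k ⟨M, hM1.trans (SimpleGraph.edgeSet_mono hle), hM2, hM3, hM4⟩
    obtain ⟨M', hM'sub, hM'match, hM'inj, hM'card⟩ :=
      ih G' hproper' (by convert hedges') (by convert hmaxdeg') hnorich'
    -- M' avoids u, v and the colour c s(u,v)
    have hM'S : ∀ f ∈ M', u ∉ f ∧ v ∉ f ∧ c f ≠ c s(u, v) := by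
      intro f hf
      have hfe : f ∈ G'.edgeSet := hM'sub (Finset.mem_coe.mpr hf)
      rw [hE'set] at hfe
      have := hfe.2
      rw [hS] at this
      simp only [Set.mem_setOf_eq, not_or] at this
      exact this
    have heS : s(u, v) ∈ S := by
      rw [hS]
      exact Or.inl (Sym2.mem_mk_left u v)
    have heM' : s(u, v) ∉ M' := by
      intro h
      have := hM'sub (Finset.mem_coe.mpr h)
      rw [hE'set] at this
      exact this.2 heS
    refine ⟨insert s(u, v) M', ?_, ⟨?_, ?_⟩, ?_, ?_⟩
    · intro f hf
      rw [Finset.coe_insert, Set.mem_insert_iff] at hf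
      rcases hf with rfl | hf
      · exact G.mem_edgeSet.mpr hadj
      · have := hM'sub hf
        rw [hE'set] at this
        exact this.1
    · intro f hf
      rw [Finset.mem_insert] at hf
      rcases hf with rfl | hf
      · rw [Sym2.mk_isDiag_iff]
        exact hadj.ne
      · exact hM'match.1 f hf
    · intro f hf g hg hfg w hwf hwg
      rw [Finset.mem_insert] at hf hg
      rcases hf with rfl | hf
      · rcases hg with rfl | hg
        · exact hfg rfl
        · rw [Sym2.mem_iff] at hwf
          rcases hwf with rfl | rfl
          · exact (hM'S g hg).1 hwg
          · exact (hM'S g hg).2.1 hwg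
      · rcases hg with rfl | hg
        · rw [Sym2.mem_iff] at hwg
          rcases hwg with rfl | rfl
          · exact (hM'S f hf).1 hwf
          · exact (hM'S f hf).2.1 hwf
        · exact hM'match.2 f hf g hg hfg w hwf hwg
    · rw [Finset.coe_insert]
      intro x hx y hy hxy
      rcases Set.mem_insert_iff.mp hx with rfl | hx
      · rcases Set.mem_insert_iff.mp hy with rfl | hy
        · rfl
        · exact absurd hxy.symm (hM'S y (Finset.mem_coe.mp hy)).2.2
      · rcases Set.mem_insert_iff.mp hy with rfl | hy
        · exact absurd hxy (hM'S x (Finset.mem_coe.mp hx)).2.2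
        · exact hM'inj hx hy hxy
    · rw [Finset.card_insert_of_notMem heM', hM'card]
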